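/- Suppose τ is in the limit circle case at a, i.e., for every z ∈ ℂ every solution of τu = zu is square integrable near a. Fix λ₀ ∈ ℝ and real-valued solutions Φ₀, Θ₀ of τu = λ₀u with W(Θ₀,Φ₀) = 1. Then the limits lim_{x→a} W_x(Φ₀, u) and lim_{x→a} W_x(Θ₀, u) exist for every solution u of τu = zu and every z ∈ ℂ. Moreover, if u(z,x) is a family of solutions of τu = zu which is holomorphic in z (for each fixed x), then z ↦ lim_{x→a} W_x(Φ₀, u(z)) and z ↦ lim_{x→a} W_x(Θ₀, u(z)) are holomorphic. -/

import Mathlib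

open MeasureTheory Set Filter Topology Complex Asymptotics

noncomputable section

/-- `q` is locally integrable on the interval `(a, b)`. -/
def LocInt (a b : ℝ) (q : ℝ → ℝ) : Prop :=
  ∀ x ∈ Set.Ioo a b, ∀ y ∈ Set.Ioo a b, IntervalIntegrable q MeasureTheory.volume x y

/-- The Wronskian `W_x(f,g) = f₁(x)g₂(x) - f₂(x)g₁(x)`. -/
def Wr (f g : ℝ → ℂ × ℂ) (x : ℝ) : ℂ :=
  (f x).1 * (g x).2 - (f x).2 * (g x).1

/-- `g = τ f` on `(a,b)` in the locally absolutely continuous sense, where `τ` is the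
one-dimensional Dirac differential expression `τ = (1/i) σ₂ d/dx + Q(x)` with potential
matrix entries `Q11 Q12 Q21 Q22`. -/
def IsTau (a b : ℝ) (Q11 Q12 Q21 Q22 : ℝ → ℝ) (f g : ℝ → ℂ × ℂ) : Prop :=
  ContinuousOn f (Set.Ioo a b) ∧
  ∀ x₀ ∈ Set.Ioo a b, ∀ x ∈ Set.Ioo a b,
    IntervalIntegrable (fun t => (g t).2 - (Q21 t : ℂ) * (f t).1 - (Q22 t : ℂ) * (f t).2)
      MeasureTheory.volume x₀ x ∧
    IntervalIntegrable (fun t => (Q11 t : ℂ) * (f t).1 + (Q12 t : ℂ) * (f t).2 - (g t).1)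
      MeasureTheory.volume x₀ x ∧
    (f x).1 = (f x₀).1 + ∫ t in x₀..x, ((g t).2 - (Q21 t : ℂ) * (f t).1 - (Q22 t : ℂ) * (f t).2) ∧
    (f x).2 = (f x₀).2 + ∫ t in x₀..x, ((Q11 t : ℂ) * (f t).1 + (Q12 t : ℂ) * (f t).2 - (g t).1)

/-- `u` is a solution of `τ u = z u` on `(a,b)`. -/
def IsSol (a b : ℝ) (Q11 Q12 Q21 Q22 : ℝ → ℝ) (z : ℂ) (u : ℝ → ℂ × ℂ) : Prop :=
  IsTau a b Q11 Q12 Q21 Q22 u (fun x => z • u x)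

/-- Solution of the Dirac equation with mass `m`, electrostatic potential `qel`,
anomalous magnetic moment `qam` and scalar potential `qsc`. -/
def DiracSol (a b m : ℝ) (qel qam qsc : ℝ → ℝ) (z : ℂ) (u : ℝ → ℂ × ℂ) : Prop :=
  IsSol a b (fun x => qel x + m + qsc x) qam qam (fun x => qel x - m - qsc x) z u

/-- `f` is real-valued (componentwise). -/
def RealValued (f : ℝ → ℂ × ℂ) : Prop :=
  ∀ x, starRingEnd ℂ (f x).1 = (f x).1 ∧ starRingEnd ℂ (f x).2 = (f x).2

/-- `f` is square integrable on `S`. -/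
def SqIntOn (S : Set ℝ) (f : ℝ → ℂ × ℂ) : Prop :=
  MeasureTheory.IntegrableOn (fun x => ‖(f x).1‖ ^ 2 + ‖(f x).2‖ ^ 2) S MeasureTheory.volume

/- ### Auxiliary lemmas -/

lemma key_fubini {c x : ℝ} {f g : ℝ → ℂ}
    (hf : IntegrableOn f (Set.Ioc c x)) (hg : IntegrableOn g (Set.Ioc c x)) :
    ((∫ t in Set.Ioc c x, (∫ s in Set.Ioc c t, f s) * g t)
      + ∫ s in Set.Ioc c x, f s * ∫ t in Set.Ioc c s, g t)
      = (∫ s in Set.Ioc c x, f s) * ∫ t in Set.Ioc c x, g t := by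
  set μ := volume.restrict (Set.Ioc c x) with hμ
  have hfg : Integrable (fun p : ℝ × ℝ => f p.1 * g p.2) (μ.prod μ) :=
    hf.mul_prod hg
  set H : ℝ × ℝ → ℂ := fun p => if p.1 ≤ p.2 then f p.1 * g p.2 else 0 with hH
  set H' : ℝ × ℝ → ℂ := fun p => if p.2 < p.1 then f p.1 * g p.2 else 0 with hH'
  have hSm : MeasurableSet {p : ℝ × ℝ | p.1 ≤ p.2} := measurableSet_le measurable_fst measurable_snd
  have hS'm : MeasurableSet {p : ℝ × ℝ | p.2 < p.1} := measurableSet_lt measurable_snd measurable_fst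
  have hHint : Integrable H (μ.prod μ) := by
    convert hfg.indicator hSm using 1 <;> rfl
  have hH'int : Integrable H' (μ.prod μ) := by
    convert hfg.indicator hS'm using 1 <;> rfl
  have hsplit : ∀ p : ℝ × ℝ, f p.1 * g p.2 = H p + H' p := by
    intro p
    by_cases h : p.1 ≤ p.2
    · simp [hH, hH', h, not_lt.2 h]
    · simp [hH, hH', h, lt_of_not_ge h]
  have E3 : ∫ p : ℝ × ℝ, f p.1 * g p.2 ∂(μ.prod μ)
      = (∫ s, f s ∂μ) * ∫ t, g t ∂μ := integral_prod_mul f g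
  have E1 : ∫ p : ℝ × ℝ, H p ∂(μ.prod μ) = ∫ t in Set.Ioc c x, (∫ s in Set.Ioc c t, f s) * g t := by
    rw [MeasureTheory.integral_prod_symm H hHint]
    refine setIntegral_congr_fun measurableSet_Ioc (fun t ht => ?_)
    have : ∀ s : ℝ, H (s, t) = (if s ≤ t then f s else 0) * g t := by
      intro s; simp [hH, ite_mul]
    simp_rw [this]
    rw [integral_mul_const]
    congr 1
    have : (fun s => if s ≤ t then f s else 0) = Set.indicator (Set.Iic t) f := by
      ext s; simp [Set.indicator_apply]
    rw [this, integral_indicator measurableSet_Iic, hμ,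
      Measure.restrict_restrict measurableSet_Iic]
    congr 1
    rw [Set.Iic_inter_Ioc_of_le (le_refl t |>.trans ht.2)]
  have E2 : ∫ p : ℝ × ℝ, H' p ∂(μ.prod μ) = ∫ s in Set.Ioc c x, f s * ∫ t in Set.Ioc c s, g t := by
    rw [MeasureTheory.integral_prod H' hH'int]
    refine setIntegral_congr_fun measurableSet_Ioc (fun s hs => ?_)
    have h1 : ∀ t : ℝ, H' (s, t) = f s * (if t < s then g t else 0) := by
      intro t; simp [hH', mul_ite]
    simp_rw [h1]
    rw [integral_const_mul]
    congr 1
    have h2 : (fun t => if t < s then g t else 0) = Set.indicator (Set.Iio s) g := by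
      ext t; simp [Set.indicator_apply]
    rw [h2, integral_indicator measurableSet_Iio, hμ,
      Measure.restrict_restrict measurableSet_Iio]
    have h3 : Set.Iio s ∩ Set.Ioc c x = Set.Ioo c s := by
      ext t
      constructor
      · rintro ⟨ha1, ha2, ha3⟩; exact ⟨ha2, ha1⟩
      · rintro ⟨ha1, ha2⟩; exact ⟨ha2, ha1, le_trans ha2.le hs.2⟩
    rw [h3, ← MeasureTheory.integral_Ioc_eq_integral_Ioo]
  rw [← E1, ← E2, ← MeasureTheory.integral_add hHint hH'int, ← E3]
  exact integral_congr_ae (Eventually.of_forall fun p => (hsplit p).symm)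

lemma intable_mul_prim {c x : ℝ} {f g : ℝ → ℂ} (hf : IntervalIntegrable f volume c x)
    (hg : IntervalIntegrable g volume c x) :
    IntervalIntegrable (fun t => (∫ s in c..t, f s) * g t) volume c x :=
  hg.continuousOn_mul (intervalIntegral.continuousOn_primitive_interval' hf left_mem_uIcc)

lemma intable_prim_mul {c x : ℝ} {f g : ℝ → ℂ} (hf : IntervalIntegrable f volume c x)
    (hg : IntervalIntegrable g volume c x) :
    IntervalIntegrable (fun t => f t * (∫ s in c..t, g s)) volume c x :=
  hf.mul_continuousOn (intervalIntegral.continuousOn_primitive_interval' hg left_mem_uIcc)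

lemma key1 {c x : ℝ} (hcx : c ≤ x) {f g : ℝ → ℂ} (hf : IntervalIntegrable f volume c x)
    (hg : IntervalIntegrable g volume c x) :
    (∫ t in c..x, ((∫ s in c..t, f s) * g t + f t * (∫ s in c..t, g s)))
      = (∫ s in c..x, f s) * (∫ s in c..x, g s) := by
  rw [intervalIntegral.integral_add (intable_mul_prim hf hg) (intable_prim_mul hf hg)]
  have hfI : IntegrableOn f (Set.Ioc c x) :=
    (intervalIntegrable_iff_integrableOn_Ioc_of_le hcx).1 hf
  have hgI : IntegrableOn g (Set.Ioc c x) :=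
    (intervalIntegrable_iff_integrableOn_Ioc_of_le hcx).1 hg
  rw [intervalIntegral.integral_of_le hcx, intervalIntegral.integral_of_le hcx,
    intervalIntegral.integral_of_le hcx, intervalIntegral.integral_of_le hcx]
  rw [setIntegral_congr_fun measurableSet_Ioc
      (show EqOn (fun t => (∫ s in c..t, f s) * g t) (fun t => (∫ s in Set.Ioc c t, f s) * g t)
        (Set.Ioc c x) from fun t ht => by
          simp only []; rw [intervalIntegral.integral_of_le ht.1.le]),
    setIntegral_congr_fun measurableSet_Ioc
      (show EqOn (fun t => f t * (∫ s in c..t, g s)) (fun t => f t * (∫ s in Set.Ioc c t, g s))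
        (Set.Ioc c x) from fun t ht => by
          simp only []; rw [intervalIntegral.integral_of_le ht.1.le])]
  exact key_fubini hfI hgI

lemma key2 {c x : ℝ} {f g : ℝ → ℂ} (hf : IntervalIntegrable f volume c x)
    (hg : IntervalIntegrable g volume c x) :
    (∫ t in c..x, ((∫ s in c..t, f s) * g t + f t * (∫ s in c..t, g s)))
      = (∫ s in c..x, f s) * (∫ s in c..x, g s) := by
  rcases le_total c x with hcx | hxc
  · exact key1 hcx hf hg
  · have hf' : IntervalIntegrable f volume x c := hf.symm
    have hg' : IntervalIntegrable g volume x c := hg.symm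
    have hsubf : ∀ t ∈ uIcc x c, IntervalIntegrable f volume x t :=
      fun t ht => hf'.mono_set (uIcc_subset_uIcc left_mem_uIcc ht)
    have hsubg : ∀ t ∈ uIcc x c, IntervalIntegrable g volume x t :=
      fun t ht => hg'.mono_set (uIcc_subset_uIcc left_mem_uIcc ht)
    have hkey := key1 hxc hf' hg'
    set Af := ∫ s in x..c, f s with hAf
    set Ag := ∫ s in x..c, g s with hAg
    have hJf : ∀ t ∈ uIcc x c, (∫ s in c..t, f s) = (∫ s in x..t, f s) - Af := by
      intro t ht
      rw [hAf, ← intervalIntegral.integral_add_adjacent_intervals hf'.symm (hsubf t ht)]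
      ring_nf
      rw [intervalIntegral.integral_symm c x]
      ring
    have hJg : ∀ t ∈ uIcc x c, (∫ s in c..t, g s) = (∫ s in x..t, g s) - Ag := by
      intro t ht
      rw [hAg, ← intervalIntegral.integral_add_adjacent_intervals hg'.symm (hsubg t ht)]
      ring_nf
      rw [intervalIntegral.integral_symm c x]
      ring
    rw [intervalIntegral.integral_symm x c]
    have hcongr : EqOn (fun t => (∫ s in c..t, f s) * g t + f t * (∫ s in c..t, g s))
        (fun t => ((∫ s in x..t, f s) * g t + f t * (∫ s in x..t, g s))
          - (Af * g t + f t * Ag)) (uIcc x c) := by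
      intro t ht
      simp only []
      rw [hJf t ht, hJg t ht]; ring
    rw [intervalIntegral.integral_congr hcongr]
    rw [intervalIntegral.integral_sub
      ((intable_mul_prim hf' hg').add (intable_prim_mul hf' hg'))
      (((hg'.const_mul Af)).add (hf'.mul_const Ag))]
    rw [hkey, intervalIntegral.integral_add (hg'.const_mul Af) (hf'.mul_const Ag)]
    rw [intervalIntegral.integral_const_mul, intervalIntegral.integral_mul_const]
    rw [intervalIntegral.integral_symm x c, intervalIntegral.integral_symm x c]
    rw [hAf, hAg]; ring

lemma prim_mul {c x : ℝ} {F G f g : ℝ → ℂ}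
    (hF : ∀ t ∈ uIcc c x, F t = F c + ∫ s in c..t, f s)
    (hG : ∀ t ∈ uIcc c x, G t = G c + ∫ s in c..t, g s)
    (hf : IntervalIntegrable f volume c x) (hg : IntervalIntegrable g volume c x) :
    F x * G x - F c * G c = ∫ t in c..x, (F t * g t + f t * G t) := by
  have hcongr : EqOn (fun t => F t * g t + f t * G t)
      (fun t => ((F c * g t + f t * G c)
        + ((∫ s in c..t, f s) * g t + f t * (∫ s in c..t, g s)))) (uIcc c x) := fun t ht => by
    simp only []; rw [hF t ht, hG t ht]; ring
  rw [intervalIntegral.integral_congr hcongr,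
    intervalIntegral.integral_add ((hg.const_mul _).add (hf.mul_const _))
      ((intable_mul_prim hf hg).add (intable_prim_mul hf hg)),
    intervalIntegral.integral_add (hg.const_mul _) (hf.mul_const _),
    key2 hf hg, intervalIntegral.integral_const_mul, intervalIntegral.integral_mul_const,
    hF x right_mem_uIcc, hG x right_mem_uIcc]
  ring

lemma uIcc_sub_Ioo {a b c x : ℝ} (hc : c ∈ Set.Ioo a b) (hx : x ∈ Set.Ioo a b) :
    uIcc c x ⊆ Set.Ioo a b := by
  intro t ht
  rcases Set.mem_uIcc.1 ht with ⟨h1, h2⟩ | ⟨h1, h2⟩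
  · exact ⟨lt_of_lt_of_le hc.1 h1, lt_of_le_of_lt h2 hx.2⟩
  · exact ⟨lt_of_lt_of_le hx.1 h1, lt_of_le_of_lt h2 hc.2⟩

lemma wr_ident {a b : ℝ} {Q11 Q12 Q22 : ℝ → ℝ} {lam z : ℂ} {f u : ℝ → ℂ × ℂ}
    (hf : IsSol a b Q11 Q12 Q12 Q22 lam f) (hu : IsSol a b Q11 Q12 Q12 Q22 z u)
    {c x : ℝ} (hc : c ∈ Set.Ioo a b) (hx : x ∈ Set.Ioo a b) :
    Wr f u x = Wr f u c
      + (lam - z) * ∫ t in c..x, ((f t).1 * (u t).1 + (f t).2 * (u t).2) := by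
  have hsub := uIcc_sub_Ioo hc hx
  obtain ⟨hfc, hfe⟩ := hf
  obtain ⟨huc, hue⟩ := hu
  obtain ⟨hPf, hQf, -, -⟩ := hfe c hc x hx
  obtain ⟨hRu, hSu, -, -⟩ := hue c hc x hx
  have hf1c : ContinuousOn (fun t => (f t).1) (uIcc c x) := ((hfc.mono hsub)).fst
  have hf2c : ContinuousOn (fun t => (f t).2) (uIcc c x) := ((hfc.mono hsub)).snd
  have hu1c : ContinuousOn (fun t => (u t).1) (uIcc c x) := ((huc.mono hsub)).fst
  have hu2c : ContinuousOn (fun t => (u t).2) (uIcc c x) := ((huc.mono hsub)).snd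
  have E1 : (f x).1 * (u x).2 - (f c).1 * (u c).2
      = ∫ t in c..x, ((f t).1 * ((Q11 t : ℂ) * (u t).1 + (Q12 t : ℂ) * (u t).2 - ((z • u t)).1)
        + (((lam • f t)).2 - (Q12 t : ℂ) * (f t).1 - (Q22 t : ℂ) * (f t).2) * (u t).2) := by
    exact prim_mul
      (fun t ht => (hfe c hc t (hsub ht)).2.2.1)
      (fun t ht => (hue c hc t (hsub ht)).2.2.2)
      hPf hSu
  have E2 : (f x).2 * (u x).1 - (f c).2 * (u c).1
      = ∫ t in c..x, ((f t).2 * (((z • u t)).2 - (Q12 t : ℂ) * (u t).1 - (Q22 t : ℂ) * (u t).2)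
        + (((Q11 t : ℂ) * (f t).1 + (Q12 t : ℂ) * (f t).2 - ((lam • f t)).1)) * (u t).1) := by
    exact prim_mul
      (fun t ht => (hfe c hc t (hsub ht)).2.2.2)
      (fun t ht => (hue c hc t (hsub ht)).2.2.1)
      hQf hRu
  have hi1 : IntervalIntegrable (fun t => (f t).1 * ((Q11 t : ℂ) * (u t).1 + (Q12 t : ℂ) * (u t).2 - ((z • u t)).1)
        + (((lam • f t)).2 - (Q12 t : ℂ) * (f t).1 - (Q22 t : ℂ) * (f t).2) * (u t).2) volume c x :=
    (hSu.continuousOn_mul hf1c).add (hPf.mul_continuousOn hu2c)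
  have hi2 : IntervalIntegrable (fun t => (f t).2 * (((z • u t)).2 - (Q12 t : ℂ) * (u t).1 - (Q22 t : ℂ) * (u t).2)
        + (((Q11 t : ℂ) * (f t).1 + (Q12 t : ℂ) * (f t).2 - ((lam • f t)).1)) * (u t).1) volume c x :=
    (hRu.continuousOn_mul hf2c).add (hQf.mul_continuousOn hu1c)
  have comb : Wr f u x - Wr f u c
      = ∫ t in c..x, (((f t).1 * ((Q11 t : ℂ) * (u t).1 + (Q12 t : ℂ) * (u t).2 - ((z • u t)).1)
        + (((lam • f t)).2 - (Q12 t : ℂ) * (f t).1 - (Q22 t : ℂ) * (f t).2) * (u t).2)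
        - ((f t).2 * (((z • u t)).2 - (Q12 t : ℂ) * (u t).1 - (Q22 t : ℂ) * (u t).2)
        + (((Q11 t : ℂ) * (f t).1 + (Q12 t : ℂ) * (f t).2 - ((lam • f t)).1)) * (u t).1)) := by
    rw [intervalIntegral.integral_sub hi1 hi2, ← E1, ← E2]
    simp [Wr]; ring
  have hptw : ∀ t : ℝ, (((f t).1 * ((Q11 t : ℂ) * (u t).1 + (Q12 t : ℂ) * (u t).2 - ((z • u t)).1)
        + (((lam • f t)).2 - (Q12 t : ℂ) * (f t).1 - (Q22 t : ℂ) * (f t).2) * (u t).2)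
        - ((f t).2 * (((z • u t)).2 - (Q12 t : ℂ) * (u t).1 - (Q22 t : ℂ) * (u t).2)
        + (((Q11 t : ℂ) * (f t).1 + (Q12 t : ℂ) * (f t).2 - ((lam • f t)).1)) * (u t).1))
      = (lam - z) * ((f t).1 * (u t).1 + (f t).2 * (u t).2) := by
    intro t
    simp only [Prod.smul_fst, Prod.smul_snd, smul_eq_mul]
    ring
  rw [← sub_eq_iff_eq_add', comb]
  rw [intervalIntegral.integral_congr (fun t _ => hptw t), intervalIntegral.integral_const_mul]

lemma sq_on_Ioc {a b c : ℝ} (hc : c ∈ Set.Ioo a b) {u : ℝ → ℂ × ℂ}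
    (huc : ContinuousOn u (Set.Ioo a b)) {c₀ : ℝ} (hc₀ : c₀ ∈ Set.Ioo a b)
    (hsq : SqIntOn (Set.Ioo a c₀) u) :
    IntegrableOn (fun t => ‖(u t).1‖ ^ 2 + ‖(u t).2‖ ^ 2) (Set.Ioc a c) := by
  set c'' := max c₀ ((c + b) / 2) with hc''
  have hc''b : c'' < b := max_lt hc₀.2 (by linarith [hc.2])
  have hcc'' : c < c'' := lt_of_lt_of_le (by linarith [hc.2]) (le_max_right _ _)
  have hcont : ContinuousOn (fun t => ‖(u t).1‖ ^ 2 + ‖(u t).2‖ ^ 2) (Set.Ioo a b) :=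
    ((huc.fst.norm.pow 2).add (huc.snd.norm.pow 2))
  have h1 : IntegrableOn (fun t => ‖(u t).1‖ ^ 2 + ‖(u t).2‖ ^ 2) (Set.Icc c₀ c'') := by
    apply ContinuousOn.integrableOn_Icc
    exact hcont.mono (fun t ht => ⟨lt_of_lt_of_le hc₀.1 ht.1, lt_of_le_of_lt ht.2 hc''b⟩)
  have h2 : IntegrableOn (fun t => ‖(u t).1‖ ^ 2 + ‖(u t).2‖ ^ 2)
      (Set.Ioo a c₀ ∪ Set.Icc c₀ c'') := hsq.union h1
  apply h2.mono_set
  intro t ht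
  rcases lt_or_ge t c₀ with h | h
  · exact Or.inl ⟨ht.1, h⟩
  · exact Or.inr ⟨h, le_trans ht.2 hcc''.le⟩

lemma pair_intable {a b c : ℝ} (hc : c ∈ Set.Ioo a b) {f u : ℝ → ℂ × ℂ}
    (hfc : ContinuousOn f (Set.Ioo a b)) (huc : ContinuousOn u (Set.Ioo a b))
    (hfsq : IntegrableOn (fun t => ‖(f t).1‖ ^ 2 + ‖(f t).2‖ ^ 2) (Set.Ioc a c))
    (husq : IntegrableOn (fun t => ‖(u t).1‖ ^ 2 + ‖(u t).2‖ ^ 2) (Set.Ioc a c)) :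
    IntegrableOn (fun t => (f t).1 * (u t).1 + (f t).2 * (u t).2) (Set.Ioc a c) := by
  have hsub : Set.Ioc a c ⊆ Set.Ioo a b := fun t ht => ⟨ht.1, lt_of_le_of_lt ht.2 hc.2⟩
  have hmeas : AEStronglyMeasurable (fun t => (f t).1 * (u t).1 + (f t).2 * (u t).2)
      (volume.restrict (Set.Ioc a c)) := by
    apply ContinuousOn.aestronglyMeasurable _ measurableSet_Ioc
    exact ((hfc.fst.mul huc.fst).add (hfc.snd.mul huc.snd)).mono hsub
  apply Integrable.mono' (hfsq.add husq) hmeas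
  filter_upwards with t
  have h1 : ‖(f t).1 * (u t).1 + (f t).2 * (u t).2‖
      ≤ ‖(f t).1‖ * ‖(u t).1‖ + ‖(f t).2‖ * ‖(u t).2‖ := by
    refine le_trans (norm_add_le _ _) ?_
    simp [norm_mul]
  refine le_trans h1 ?_
  simp only [Pi.add_apply]
  nlinarith [sq_nonneg (‖(f t).1‖ - ‖(u t).1‖), sq_nonneg (‖(f t).2‖ - ‖(u t).2‖),
    norm_nonneg (f t).1, norm_nonneg (u t).1, norm_nonneg (f t).2, norm_nonneg (u t).2]

lemma tendsto_wr {a b : ℝ} {Q11 Q12 Q22 : ℝ → ℝ} {lam z : ℂ} {f u : ℝ → ℂ × ℂ}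
    (hf : IsSol a b Q11 Q12 Q12 Q22 lam f) (hu : IsSol a b Q11 Q12 Q12 Q22 z u)
    {c : ℝ} (hc : c ∈ Set.Ioo a b)
    (hp : IntegrableOn (fun t => (f t).1 * (u t).1 + (f t).2 * (u t).2) (Set.Ioc a c)) :
    Tendsto (fun x => Wr f u x) (nhdsWithin a (Set.Ioi a))
      (nhds (Wr f u c - (lam - z) * ∫ t in Set.Ioc a c,
        ((f t).1 * (u t).1 + (f t).2 * (u t).2))) := by
  set p := fun t => (f t).1 * (u t).1 + (f t).2 * (u t).2 with hpd
  have heq : ∀ x ∈ Set.Ioo a c, Wr f u x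
      = (Wr f u c - (lam - z) * ∫ t in Set.Ioc a c, p t)
        + (lam - z) * ∫ t in Set.Ioc a x, p t := by
    intro x hx
    have hxab : x ∈ Set.Ioo a b := ⟨hx.1, lt_trans hx.2 hc.2⟩
    have hsplit : (∫ t in Set.Ioc a c, p t)
        = (∫ t in Set.Ioc a x, p t) + ∫ t in Set.Ioc x c, p t := by
      rw [← MeasureTheory.setIntegral_union (Set.Ioc_disjoint_Ioc_of_le le_rfl) measurableSet_Ioc
        (hp.mono_set (Set.Ioc_subset_Ioc_right hx.2.le))
        (hp.mono_set (Set.Ioc_subset_Ioc_left hx.1.le)),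
        Set.Ioc_union_Ioc_eq_Ioc hx.1.le hx.2.le]
    have hwr := wr_ident hf hu hc hxab
    rw [hwr, intervalIntegral.integral_symm, intervalIntegral.integral_of_le hx.2.le]
    rw [hsplit]; ring_nf; rfl
  have hG : Tendsto (fun x => ∫ t in Set.Ioc a x, p t) (nhdsWithin a (Set.Ioi a)) (nhds 0) := by
    have hint : IntegrableOn p (Set.Icc a c) := by
      rwa [integrableOn_Icc_iff_integrableOn_Ioc]
    have hcont := intervalIntegral.continuousOn_primitive hint
    have h0 : (∫ t in Set.Ioc a a, p t) = 0 := by simp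
    have := (hcont a ⟨le_refl a, le_of_lt hc.1⟩)
    rw [ContinuousWithinAt, h0] at this
    refine this.mono_left ?_
    rw [← nhdsWithin_Ioc_eq_nhdsGT hc.1]
    exact nhdsWithin_mono _ Set.Ioc_subset_Icc_self
  have hlim : Tendsto (fun x => (Wr f u c - (lam - z) * ∫ t in Set.Ioc a c, p t)
      + (lam - z) * ∫ t in Set.Ioc a x, p t) (nhdsWithin a (Set.Ioi a))
      (nhds (Wr f u c - (lam - z) * ∫ t in Set.Ioc a c, p t)) := by
    have h2 : Tendsto (fun x => (lam - z) * ∫ t in Set.Ioc a x, p t)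
        (nhdsWithin a (Set.Ioi a)) (nhds ((lam - z) * 0)) := hG.const_mul _
    rw [mul_zero] at h2
    simpa using tendsto_const_nhds.add h2
  refine hlim.congr' ?_
  filter_upwards [Ioo_mem_nhdsGT_of_mem (Set.left_mem_Ico.2 hc.1)] with x hx
  exact (heq x hx).symm

lemma primitive_tendsto_zero {a c : ℝ} (hac : a < c) {p : ℝ → ℝ}
    (hp : IntegrableOn p (Set.Ioc a c)) :
    Tendsto (fun x => ∫ t in Set.Ioc a x, p t) (nhdsWithin a (Set.Ioi a)) (nhds 0) := by
  have hint : IntegrableOn p (Set.Icc a c) := by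
    rwa [integrableOn_Icc_iff_integrableOn_Ioc]
  have hcont := intervalIntegral.continuousOn_primitive hint
  have h0 : (∫ t in Set.Ioc a a, p t) = 0 := by simp
  have := (hcont a ⟨le_refl a, le_of_lt hac⟩)
  rw [ContinuousWithinAt, h0] at this
  refine this.mono_left ?_
  rw [← nhdsWithin_Ioc_eq_nhdsGT hac]
  exact nhdsWithin_mono _ Set.Ioc_subset_Icc_self

theorem statement5
    (a b : ℝ) (hab : a < b) (m : ℝ) (hm : 0 ≤ m)
    (qel qam qsc : ℝ → ℝ)
    (hqel : LocInt a b qel) (hqam : LocInt a b qam) (hqsc : LocInt a b qsc)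
    (hLC : ∀ z : ℂ, ∀ u : ℝ → ℂ × ℂ, DiracSol a b m qel qam qsc z u →
      ∃ c ∈ Set.Ioo a b, SqIntOn (Set.Ioo a c) u)
    (lam₀ : ℝ) (Φ₀ Θ₀ : ℝ → ℂ × ℂ)
    (hΦ₀ : DiracSol a b m qel qam qsc (lam₀ : ℂ) Φ₀)
    (hΘ₀ : DiracSol a b m qel qam qsc (lam₀ : ℂ) Θ₀)
    (hΦ₀r : RealValued Φ₀) (hΘ₀r : RealValued Θ₀)
    (hW₀ : ∀ x ∈ Set.Ioo a b, Wr Θ₀ Φ₀ x = 1) :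
    (∀ z : ℂ, ∀ u : ℝ → ℂ × ℂ, DiracSol a b m qel qam qsc z u →
      (∃ L : ℂ, Filter.Tendsto (fun x => Wr Φ₀ u x) (nhdsWithin a (Set.Ioi a)) (nhds L)) ∧
      (∃ L : ℂ, Filter.Tendsto (fun x => Wr Θ₀ u x) (nhdsWithin a (Set.Ioi a)) (nhds L))) ∧
    (∀ u : ℂ → ℝ → ℂ × ℂ,
      (∀ z, DiracSol a b m qel qam qsc z (u z)) →
      (∀ x ∈ Set.Ioo a b, Differentiable ℂ (fun z => (u z x).1) ∧
        Differentiable ℂ (fun z => (u z x).2)) →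
      (∃ WΦ : ℂ → ℂ, Differentiable ℂ WΦ ∧
        ∀ z, Filter.Tendsto (fun x => Wr Φ₀ (u z) x) (nhdsWithin a (Set.Ioi a)) (nhds (WΦ z))) ∧
      (∃ WΘ : ℂ → ℂ, Differentiable ℂ WΘ ∧
        ∀ z, Filter.Tendsto (fun x => Wr Θ₀ (u z) x) (nhdsWithin a (Set.Ioi a)) (nhds (WΘ z)))) := by
  -- notation
  set Q11 : ℝ → ℝ := fun x => qel x + m + qsc x with hQ11
  set Q22 : ℝ → ℝ := fun x => qel x - m - qsc x with hQ22
  have hΦ : IsSol a b Q11 qam qam Q22 (lam₀ : ℂ) Φ₀ := hΦ₀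
  have hΘ : IsSol a b Q11 qam qam Q22 (lam₀ : ℂ) Θ₀ := hΘ₀
  have hΦc : ContinuousOn Φ₀ (Set.Ioo a b) := hΦ.1
  have hΘc : ContinuousOn Θ₀ (Set.Ioo a b) := hΘ.1
  -- square-integrability of solutions on all Ioc a c
  have hsqall : ∀ z : ℂ, ∀ v : ℝ → ℂ × ℂ, DiracSol a b m qel qam qsc z v →
      ∀ c ∈ Set.Ioo a b, IntegrableOn (fun t => ‖(v t).1‖ ^ 2 + ‖(v t).2‖ ^ 2) (Set.Ioc a c) := by
    intro z v hv c hc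
    obtain ⟨c₀, hc₀, hsq⟩ := hLC z v hv
    exact sq_on_Ioc hc (hv.1) hc₀ hsq
  have hΦsq := hsqall (lam₀ : ℂ) Φ₀ hΦ₀
  have hΘsq := hsqall (lam₀ : ℂ) Θ₀ hΘ₀
  set c : ℝ := (a + b) / 2 with hcdef
  have hc : c ∈ Set.Ioo a b := ⟨by simp [hcdef]; linarith, by simp [hcdef]; linarith⟩
  -- Part A as a reusable statement
  have partA : ∀ z : ℂ, ∀ v : ℝ → ℂ × ℂ, DiracSol a b m qel qam qsc z v →
      ∀ f : ℝ → ℂ × ℂ, IsSol a b Q11 qam qam Q22 (lam₀ : ℂ) f →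
      (∀ c' ∈ Set.Ioo a b, IntegrableOn (fun t => ‖(f t).1‖ ^ 2 + ‖(f t).2‖ ^ 2) (Set.Ioc a c')) →
      ∀ c' ∈ Set.Ioo a b,
      Tendsto (fun x => Wr f v x) (nhdsWithin a (Set.Ioi a))
        (nhds (Wr f v c' - ((lam₀ : ℂ) - z) * ∫ t in Set.Ioc a c',
          ((f t).1 * (v t).1 + (f t).2 * (v t).2))) := by
    intro z v hv f hf hfsq c' hc'
    have hvsol : IsSol a b Q11 qam qam Q22 z v := hv
    exact tendsto_wr hf hvsol hc'
      (pair_intable hc' hf.1 hvsol.1 (hfsq c' hc') (hsqall z v hv c' hc'))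
  constructor
  · intro z v hv
    refine ⟨⟨_, partA z v hv Φ₀ hΦ hΦsq c hc⟩, ⟨_, partA z v hv Θ₀ hΘ hΘsq c hc⟩⟩
  · intro u hu hdiff
    have husol : ∀ z, IsSol a b Q11 qam qam Q22 z (u z) := hu
    have husq : ∀ z, ∀ c' ∈ Set.Ioo a b,
        IntegrableOn (fun t => ‖(u z t).1‖ ^ 2 + ‖(u z t).2‖ ^ 2) (Set.Ioc a c') :=
      fun z => hsqall z (u z) (hu z)
    -- the weight function NN
    set NN : ℝ → ℝ := fun t => ‖(Φ₀ t).1‖ + ‖(Φ₀ t).2‖ + ‖(Θ₀ t).1‖ + ‖(Θ₀ t).2‖ with hNNdef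
    have hNN0 : ∀ t, 0 ≤ NN t := fun t => by
      simp only [hNNdef]
      positivity
    have hNNc : ContinuousOn NN (Set.Ioo a b) :=
      ((hΦc.fst.norm.add hΦc.snd.norm).add hΘc.fst.norm).add hΘc.snd.norm
    have hNNsq : ∀ c' ∈ Set.Ioo a b, IntegrableOn (fun t => NN t ^ 2) (Set.Ioc a c') := by
      intro c' hc'
      have hsub : Set.Ioc a c' ⊆ Set.Ioo a b := fun t ht => ⟨ht.1, lt_of_le_of_lt ht.2 hc'.2⟩
      refine Integrable.mono' (((hΦsq c' hc').add (hΘsq c' hc')).const_mul 4)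
        (((hNNc.pow 2).mono hsub).aestronglyMeasurable measurableSet_Ioc) ?_
      filter_upwards with t
      have h0 := hNN0 t
      rw [Real.norm_eq_abs, _root_.abs_of_nonneg (by positivity)]
      simp only [hNNdef, Pi.add_apply]
      nlinarith [norm_nonneg (Φ₀ t).1, norm_nonneg (Φ₀ t).2, norm_nonneg (Θ₀ t).1,
        norm_nonneg (Θ₀ t).2, sq_nonneg (‖(Φ₀ t).1‖ - ‖(Φ₀ t).2‖),
        sq_nonneg (‖(Θ₀ t).1‖ - ‖(Θ₀ t).2‖),
        sq_nonneg (‖(Φ₀ t).1‖ + ‖(Φ₀ t).2‖ - ‖(Θ₀ t).1‖ - ‖(Θ₀ t).2‖)]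
    have hptΦ : ∀ t, ‖(Φ₀ t).1‖ + ‖(Φ₀ t).2‖ ≤ NN t := fun t => by
      simp only [hNNdef]
      have := norm_nonneg (Θ₀ t).1; have := norm_nonneg (Θ₀ t).2; linarith
    have hptΘ : ∀ t, ‖(Θ₀ t).1‖ + ‖(Θ₀ t).2‖ ≤ NN t := fun t => by
      simp only [hNNdef]
      have := norm_nonneg (Φ₀ t).1; have := norm_nonneg (Φ₀ t).2; linarith
    -- pointwise decomposition bound
    have hdecomp : ∀ z, ∀ t ∈ Set.Ioo a b,
        ‖(u z t).1‖ + ‖(u z t).2‖ ≤ (‖Wr Φ₀ (u z) t‖ + ‖Wr Θ₀ (u z) t‖) * NN t := by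
      intro z t ht
      have hw := hW₀ t ht
      have e1 : (u z t).1 = -(Wr Φ₀ (u z) t) * (Θ₀ t).1 + (Wr Θ₀ (u z) t) * (Φ₀ t).1 := by
        simp only [Wr] at hw ⊢
        linear_combination (-(u z t).1) * hw
      have e2 : (u z t).2 = -(Wr Φ₀ (u z) t) * (Θ₀ t).2 + (Wr Θ₀ (u z) t) * (Φ₀ t).2 := by
        simp only [Wr] at hw ⊢
        linear_combination (-(u z t).2) * hw
      have b1 : ‖(u z t).1‖ ≤ ‖Wr Φ₀ (u z) t‖ * ‖(Θ₀ t).1‖ + ‖Wr Θ₀ (u z) t‖ * ‖(Φ₀ t).1‖ := by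
        rw [e1]
        refine le_trans (norm_add_le _ _) ?_
        simp [norm_mul]
      have b2 : ‖(u z t).2‖ ≤ ‖Wr Φ₀ (u z) t‖ * ‖(Θ₀ t).2‖ + ‖Wr Θ₀ (u z) t‖ * ‖(Φ₀ t).2‖ := by
        rw [e2]
        refine le_trans (norm_add_le _ _) ?_
        simp [norm_mul]
      simp only [hNNdef]
      nlinarith [norm_nonneg (Wr Φ₀ (u z) t), norm_nonneg (Wr Θ₀ (u z) t),
        norm_nonneg (Θ₀ t).1, norm_nonneg (Θ₀ t).2, norm_nonneg (Φ₀ t).1, norm_nonneg (Φ₀ t).2]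
    -- the limit functions
    set WΦ : ℂ → ℂ := fun z => Wr Φ₀ (u z) c - ((lam₀ : ℂ) - z) * ∫ t in Set.Ioc a c,
      ((Φ₀ t).1 * (u z t).1 + (Φ₀ t).2 * (u z t).2) with hWΦdef
    set WΘ : ℂ → ℂ := fun z => Wr Θ₀ (u z) c - ((lam₀ : ℂ) - z) * ∫ t in Set.Ioc a c,
      ((Θ₀ t).1 * (u z t).1 + (Θ₀ t).2 * (u z t).2) with hWΘdef
    have hWΦlim : ∀ z, Tendsto (fun x => Wr Φ₀ (u z) x) (nhdsWithin a (Set.Ioi a)) (nhds (WΦ z)) :=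
      fun z => partA z (u z) (hu z) Φ₀ hΦ hΦsq c hc
    have hWΘlim : ∀ z, Tendsto (fun x => Wr Θ₀ (u z) x) (nhdsWithin a (Set.Ioi a)) (nhds (WΘ z)) :=
      fun z => partA z (u z) (hu z) Θ₀ hΘ hΘsq c hc
    suffices hd : ∀ z₀ : ℂ, DifferentiableAt ℂ WΦ z₀ ∧ DifferentiableAt ℂ WΘ z₀ by
      exact ⟨⟨WΦ, fun z => (hd z).1, hWΦlim⟩, ⟨WΘ, fun z => (hd z).2, hWΘlim⟩⟩
    intro z₀
    -- shared constants
    set γK : ℝ := ‖(lam₀ : ℂ) - z₀‖ + 1 with hγKdef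
    have hγK0 : (0:ℝ) ≤ γK := by have := norm_nonneg ((lam₀ : ℂ) - z₀); linarith
    have hγKb : ∀ z ∈ Metric.closedBall z₀ 1, ‖(lam₀ : ℂ) - z‖ ≤ γK := by
      intro z hz
      rw [Metric.mem_closedBall] at hz
      calc ‖(lam₀ : ℂ) - z‖ = ‖((lam₀ : ℂ) - z₀) + (z₀ - z)‖ := by ring_nf
        _ ≤ ‖(lam₀ : ℂ) - z₀‖ + ‖z₀ - z‖ := norm_add_le _ _
        _ ≤ ‖(lam₀ : ℂ) - z₀‖ + 1 := by
            have : ‖z₀ - z‖ = dist z z₀ := by rw [dist_eq_norm, norm_sub_rev]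
            linarith [this ▸ hz]
    clear_value γK
    set R : ℝ → ℝ := fun x => ∫ t in Set.Ioc a x, NN t ^ 2 with hRdef
    have hR0 : Tendsto R (nhdsWithin a (Set.Ioi a)) (nhds 0) :=
      primitive_tendsto_zero hc.1 (hNNsq c hc)
    have hRnonneg : ∀ x, 0 ≤ R x :=
      fun x => setIntegral_nonneg measurableSet_Ioc (fun t _ => sq_nonneg _)
    -- choose the base point c'
    have hev : ∀ᶠ x in nhdsWithin a (Set.Ioi a), γK * R x < 1/4 ∧ x ∈ Set.Ioo a c := by
      have h1 : Tendsto (fun x => γK * R x) (nhdsWithin a (Set.Ioi a)) (nhds (γK * 0)) :=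
        hR0.const_mul γK
      rw [mul_zero] at h1
      exact (h1.eventually_lt_const (by norm_num)).and
        (Ioo_mem_nhdsGT_of_mem ⟨le_refl a, hc.1⟩)
    obtain ⟨c', hc'R, hc'2⟩ := hev.exists
    have hc'ab : c' ∈ Set.Ioo a b := ⟨hc'2.1, lt_trans hc'2.2 hc.2⟩
    -- the sup of the Wronskians near a
    set G : ℂ → ℝ → ℝ := fun z x => ‖Wr Φ₀ (u z) x‖ + ‖Wr Θ₀ (u z) x‖ with hGdef
    have hGnonneg : ∀ z x, 0 ≤ G z x := fun z x => by
      simp only [hGdef]; positivity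
    have hGc : ∀ z, ContinuousOn (G z) (Set.Ioo a b) := by
      intro z
      have h1 : ContinuousOn (fun x => Wr Φ₀ (u z) x) (Set.Ioo a b) :=
        (hΦc.fst.mul (husol z).1.snd).sub (hΦc.snd.mul (husol z).1.fst)
      have h2 : ContinuousOn (fun x => Wr Θ₀ (u z) x) (Set.Ioo a b) :=
        (hΘc.fst.mul (husol z).1.snd).sub (hΘc.snd.mul (husol z).1.fst)
      exact h1.norm.add h2.norm
    have hbdd : ∀ z, BddAbove (G z '' Set.Ioc a c') := by
      intro z
      have hev1 : ∀ᶠ x in nhdsWithin a (Set.Ioi a), G z x ≤ ‖WΦ z‖ + ‖WΘ z‖ + 2 := by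
        have e1 : ∀ᶠ x in nhdsWithin a (Set.Ioi a), ‖Wr Φ₀ (u z) x‖ < ‖WΦ z‖ + 1 :=
          (hWΦlim z).norm.eventually_lt_const (by linarith)
        have e2 : ∀ᶠ x in nhdsWithin a (Set.Ioi a), ‖Wr Θ₀ (u z) x‖ < ‖WΘ z‖ + 1 :=
          (hWΘlim z).norm.eventually_lt_const (by linarith)
        filter_upwards [e1, e2] with x h1 h2
        simp only [hGdef]; linarith
      obtain ⟨S, hSmem, hS⟩ := hev1.exists_mem
      obtain ⟨d, hd, hdsub⟩ := mem_nhdsGT_iff_exists_Ioc_subset.1 hSmem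
      set d' : ℝ := min d c' with hd'def
      have hd'a : a < d' := lt_min hd hc'ab.1
      have hIccsub : Set.Icc d' c' ⊆ Set.Ioo a b :=
        fun t ht => ⟨lt_of_lt_of_le hd'a ht.1, lt_of_le_of_lt ht.2 hc'ab.2⟩
      obtain ⟨C2, hC2⟩ := (isCompact_Icc : IsCompact (Set.Icc d' c')).exists_bound_of_continuousOn
        ((hGc z).mono hIccsub)
      refine ⟨max (‖WΦ z‖ + ‖WΘ z‖ + 2) C2, ?_⟩
      rintro y ⟨x, hx, rfl⟩
      rcases le_total x d with hxd | hxd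
      · exact le_max_of_le_left (hS x (hdsub ⟨hx.1, hxd⟩))
      · have hxd' : x ∈ Set.Icc d' c' := ⟨le_trans (min_le_left d c') hxd, hx.2⟩
        exact le_max_of_le_right (le_trans (le_abs_self _) (hC2 x hxd'))
    have hgle : ∀ z, ∀ x ∈ Set.Ioc a c', G z x ≤ sSup (G z '' Set.Ioc a c') :=
      fun z x hx => le_csSup (hbdd z) (Set.mem_image_of_mem _ hx)
    set Mz : ℂ → ℝ := fun z => sSup (G z '' Set.Ioc a c') with hMzdef
    have hc'mem : c' ∈ Set.Ioc a c' := ⟨hc'ab.1, le_refl c'⟩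
    have hM0 : ∀ z, 0 ≤ Mz z :=
      fun z => le_trans (hGnonneg z c') (hgle z c' hc'mem)
    -- pointwise solution bound on Ioc a c'
    have hnu : ∀ z, ∀ t ∈ Set.Ioc a c', ‖(u z t).1‖ + ‖(u z t).2‖ ≤ Mz z * NN t := by
      intro z t ht
      have h1 := hdecomp z t ⟨ht.1, lt_of_le_of_lt ht.2 hc'ab.2⟩
      have h2 := hgle z t ht
      have h3 := hNN0 t
      have h4 := hGnonneg z t
      calc ‖(u z t).1‖ + ‖(u z t).2‖ ≤ G z t * NN t := h1
        _ ≤ Mz z * NN t := mul_le_mul_of_nonneg_right h2 h3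
    -- integrability of pairings on Ioc a c'
    have hpint : ∀ (f : ℝ → ℂ × ℂ), ContinuousOn f (Set.Ioo a b) →
        (∀ c'' ∈ Set.Ioo a b, IntegrableOn (fun t => ‖(f t).1‖ ^ 2 + ‖(f t).2‖ ^ 2) (Set.Ioc a c'')) →
        ∀ z, IntegrableOn (fun t => (f t).1 * (u z t).1 + (f t).2 * (u z t).2) (Set.Ioc a c') :=
      fun f hfc hfsq z => pair_intable hc'ab hfc (husol z).1 (hfsq c' hc'ab) (husq z c' hc'ab)
    -- the master integral bound
    have hIbound : ∀ (f : ℝ → ℂ × ℂ), (∀ t, ‖(f t).1‖ + ‖(f t).2‖ ≤ NN t) → ∀ z,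
        IntegrableOn (fun t => (f t).1 * (u z t).1 + (f t).2 * (u z t).2) (Set.Ioc a c') →
        ∀ x y : ℝ, Set.Ioc x y ⊆ Set.Ioc a c' →
        ‖∫ t in Set.Ioc x y, ((f t).1 * (u z t).1 + (f t).2 * (u z t).2)‖
          ≤ Mz z * ∫ t in Set.Ioc x y, NN t ^ 2 := by
      intro f hpt z hint x y hxy
      calc ‖∫ t in Set.Ioc x y, ((f t).1 * (u z t).1 + (f t).2 * (u z t).2)‖
          ≤ ∫ t in Set.Ioc x y, ‖(f t).1 * (u z t).1 + (f t).2 * (u z t).2‖ :=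
            norm_integral_le_integral_norm _
        _ ≤ ∫ t in Set.Ioc x y, Mz z * NN t ^ 2 := by
            refine setIntegral_mono_on ((hint.mono_set hxy).norm)
              (((hNNsq c' hc'ab).mono_set hxy).const_mul (Mz z)) measurableSet_Ioc ?_
            intro t ht
            have h1 : ‖(f t).1 * (u z t).1 + (f t).2 * (u z t).2‖
                ≤ ‖(f t).1‖ * ‖(u z t).1‖ + ‖(f t).2‖ * ‖(u z t).2‖ := by
              refine le_trans (norm_add_le _ _) ?_
              simp [norm_mul]
            have h2 := hpt t
            have h3 := hnu z t (hxy ht)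
            have h5 := hNN0 t
            have h6 := hM0 z
            nlinarith [norm_nonneg (f t).1, norm_nonneg (f t).2,
              norm_nonneg (u z t).1, norm_nonneg (u z t).2]
        _ = Mz z * ∫ t in Set.Ioc x y, NN t ^ 2 := MeasureTheory.integral_const_mul _ _
    have hRmono : ∀ x y : ℝ, Set.Ioc x y ⊆ Set.Ioc a c' →
        (∫ t in Set.Ioc x y, NN t ^ 2) ≤ R c' := by
      intro x y hxy
      exact setIntegral_mono_set (hNNsq c' hc'ab)
        (Eventually.of_forall (fun t => sq_nonneg _)) (HasSubset.Subset.eventuallyLE hxy)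
    -- the crucial bound on Mz for z in the closed ball
    have hMle : ∀ z ∈ Metric.closedBall z₀ 1, Mz z ≤ 2 * G z c' := by
      intro z hz
      have hγ := hγKb z hz
      have hγ0 : (0:ℝ) ≤ ‖(lam₀ : ℂ) - z‖ := norm_nonneg _
      have hs : ∀ x ∈ Set.Ioc a c', G z x ≤ G z c' + (1/2) * Mz z := by
        intro x hx
        have hxmem : x ∈ Set.Ioo a b := ⟨hx.1, lt_of_le_of_lt hx.2 hc'ab.2⟩
        have key : ∀ (f : ℝ → ℂ × ℂ), IsSol a b Q11 qam qam Q22 (lam₀ : ℂ) f →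
            (∀ t, ‖(f t).1‖ + ‖(f t).2‖ ≤ NN t) →
            IntegrableOn (fun t => (f t).1 * (u z t).1 + (f t).2 * (u z t).2) (Set.Ioc a c') →
            ‖Wr f (u z) x‖ ≤ ‖Wr f (u z) c'‖ + γK * (Mz z * R c') := by
          intro f hf hpt hint
          have hwr := wr_ident hf (husol z) hc'ab hxmem
          rw [intervalIntegral.integral_symm, intervalIntegral.integral_of_le hx.2] at hwr
          have hb := hIbound f hpt z hint x c' (Set.Ioc_subset_Ioc_left hx.1.le)
          have hb2 := hRmono x c' (Set.Ioc_subset_Ioc_left hx.1.le)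
          calc ‖Wr f (u z) x‖
              ≤ ‖Wr f (u z) c'‖ + ‖(lam₀ : ℂ) - z‖
                * ‖∫ t in Set.Ioc x c', ((f t).1 * (u z t).1 + (f t).2 * (u z t).2)‖ := by
                rw [hwr]
                refine le_trans (norm_add_le _ _) ?_
                rw [norm_mul, norm_neg]
            _ ≤ ‖Wr f (u z) c'‖ + γK * (Mz z * R c') := by
                have h7 : ‖∫ t in Set.Ioc x c', ((f t).1 * (u z t).1 + (f t).2 * (u z t).2)‖
                    ≤ Mz z * R c' := le_trans hb (mul_le_mul_of_nonneg_left hb2 (hM0 z))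
                have h8 := norm_nonneg (∫ t in Set.Ioc x c',
                  ((f t).1 * (u z t).1 + (f t).2 * (u z t).2))
                have h9 := mul_le_mul hγ h7 h8 hγK0
                linarith
        have k1 := key Φ₀ hΦ hptΦ (hpint Φ₀ hΦc hΦsq z)
        have k2 := key Θ₀ hΘ hptΘ (hpint Θ₀ hΘc hΘsq z)
        have h9 : γK * (Mz z * R c') ≤ (1/4) * Mz z := by
          have hmm := mul_le_mul_of_nonneg_right (le_of_lt hc'R) (hM0 z)
          calc γK * (Mz z * R c') = γK * R c' * Mz z := by ring
            _ ≤ 1/4 * Mz z := hmm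
        have hGx : G z x = ‖Wr Φ₀ (u z) x‖ + ‖Wr Θ₀ (u z) x‖ := rfl
        have hGc' : G z c' = ‖Wr Φ₀ (u z) c'‖ + ‖Wr Θ₀ (u z) c'‖ := rfl
        rw [hGx, hGc']
        linarith
      have h10 : Mz z ≤ G z c' + (1/2) * Mz z := by
        refine csSup_le (Set.Nonempty.image _ ⟨c', hc'mem⟩) ?_
        rintro y ⟨x, hx, rfl⟩
        exact hs x hx
      generalize hA : Mz z = A at h10 ⊢
      generalize hB : G z c' = B at h10 ⊢
      linarith
    -- continuity of z ↦ G z c' and the compact bound CK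
    have hGcont : Continuous (fun z => G z c') := by
      have h1 : Continuous (fun z => Wr Φ₀ (u z) c') := by
        simp only [Wr]
        exact ((continuous_const.mul (hdiff c' hc'ab).2.continuous).sub
          (continuous_const.mul (hdiff c' hc'ab).1.continuous))
      have h2 : Continuous (fun z => Wr Θ₀ (u z) c') := by
        simp only [Wr]
        exact ((continuous_const.mul (hdiff c' hc'ab).2.continuous).sub
          (continuous_const.mul (hdiff c' hc'ab).1.continuous))
      exact h1.norm.add h2.norm
    obtain ⟨CK, hCK⟩ := (isCompact_closedBall z₀ 1).exists_bound_of_continuousOn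
      hGcont.continuousOn
    have hCK' : ∀ z ∈ Metric.closedBall z₀ 1, G z c' ≤ CK :=
      fun z hz => le_trans (le_abs_self _) (hCK z hz)
    have hCK0 : 0 ≤ CK :=
      le_trans (hGnonneg z₀ c') (hCK' z₀ (Metric.mem_closedBall_self (by norm_num)))
    -- the generic differentiability lemma
    have hgen : ∀ (f : ℝ → ℂ × ℂ), IsSol a b Q11 qam qam Q22 (lam₀ : ℂ) f →
        ContinuousOn f (Set.Ioo a b) →
        (∀ c'' ∈ Set.Ioo a b, IntegrableOn (fun t => ‖(f t).1‖ ^ 2 + ‖(f t).2‖ ^ 2) (Set.Ioc a c'')) →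
        (∀ t, ‖(f t).1‖ + ‖(f t).2‖ ≤ NN t) →
        ∀ (W : ℂ → ℂ), (∀ z, Tendsto (fun x => Wr f (u z) x) (nhdsWithin a (Set.Ioi a)) (nhds (W z))) →
        DifferentiableAt ℂ W z₀ := by
      intro f hf hfc hfsq hpt W hW
      have hform : ∀ z, W z = Wr f (u z) c' - ((lam₀ : ℂ) - z) * ∫ t in Set.Ioc a c',
          ((f t).1 * (u z t).1 + (f t).2 * (u z t).2) :=
        fun z => tendsto_nhds_unique (hW z) (partA z (u z) (hu z) f hf hfsq c' hc'ab)
      have hdiffeq : ∀ z, ∀ x ∈ Set.Ioo a c', Wr f (u z) x - W z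
          = ((lam₀ : ℂ) - z) * ∫ t in Set.Ioc a x,
            ((f t).1 * (u z t).1 + (f t).2 * (u z t).2) := by
        intro z x hx
        have hint := hpint f hfc hfsq z
        have hwr := wr_ident hf (husol z) hc'ab ⟨hx.1, lt_trans hx.2 hc'ab.2⟩
        rw [intervalIntegral.integral_symm, intervalIntegral.integral_of_le hx.2.le] at hwr
        have hsplit : (∫ t in Set.Ioc a c', ((f t).1 * (u z t).1 + (f t).2 * (u z t).2))
            = (∫ t in Set.Ioc a x, ((f t).1 * (u z t).1 + (f t).2 * (u z t).2))
              + ∫ t in Set.Ioc x c', ((f t).1 * (u z t).1 + (f t).2 * (u z t).2) := by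
          rw [← MeasureTheory.setIntegral_union (Set.Ioc_disjoint_Ioc_of_le le_rfl) measurableSet_Ioc
            (hint.mono_set (Set.Ioc_subset_Ioc_right hx.2.le))
            (hint.mono_set (Set.Ioc_subset_Ioc_left hx.1.le)),
            Set.Ioc_union_Ioc_eq_Ioc hx.1.le hx.2.le]
        rw [hform z, hwr, hsplit]
        ring
      have hTU : TendstoUniformlyOn (fun x z => Wr f (u z) x) W
          (nhdsWithin a (Set.Ioi a)) (Metric.ball z₀ 1) := by
        rw [Metric.tendstoUniformlyOn_iff]
        intro ε hε
        have hlim2 : Tendsto (fun x => γK * (2 * CK) * R x) (nhdsWithin a (Set.Ioi a))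
            (nhds (γK * (2 * CK) * 0)) := hR0.const_mul _
        rw [mul_zero] at hlim2
        filter_upwards [hlim2.eventually_lt_const hε,
          Ioo_mem_nhdsGT_of_mem ⟨le_refl a, hc'ab.1⟩] with x hx1 hx2 z hz
        have hz' : z ∈ Metric.closedBall z₀ 1 := Metric.ball_subset_closedBall hz
        rw [dist_eq_norm, norm_sub_rev, hdiffeq z x hx2, norm_mul]
        have hb' : ‖∫ t in Set.Ioc a x, ((f t).1 * (u z t).1 + (f t).2 * (u z t).2)‖
            ≤ Mz z * R x := hIbound f hpt z (hpint f hfc hfsq z) a x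
          (Set.Ioc_subset_Ioc_right hx2.2.le)
        have hγ := hγKb z hz'
        have hMz := hMle z hz'
        have hG := hCK' z hz'
        have hR := hRnonneg x
        have hn := norm_nonneg (∫ t in Set.Ioc a x, ((f t).1 * (u z t).1 + (f t).2 * (u z t).2))
        calc ‖(lam₀ : ℂ) - z‖ * ‖∫ t in Set.Ioc a x, ((f t).1 * (u z t).1 + (f t).2 * (u z t).2)‖
            ≤ γK * (Mz z * R x) := mul_le_mul hγ hb' hn hγK0
          _ ≤ γK * ((2 * CK) * R x) := by
              have hGn := hGnonneg z c'
              have h1 : Mz z * R x ≤ (2 * CK) * R x :=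
                mul_le_mul_of_nonneg_right (le_trans hMz (by linarith)) hR
              exact mul_le_mul_of_nonneg_left h1 hγK0
          _ = γK * (2 * CK) * R x := by ring
          _ < ε := hx1
      have hdo : DifferentiableOn ℂ W (Metric.ball z₀ 1) := by
        refine hTU.tendstoLocallyUniformlyOn.differentiableOn ?_ Metric.isOpen_ball
        filter_upwards [Ioo_mem_nhdsGT_of_mem ⟨le_refl a, hab⟩] with x hx
        intro z _
        refine DifferentiableAt.differentiableWithinAt ?_
        have : (fun z => Wr f (u z) x)
            = fun z => (f x).1 * (u z x).2 - (f x).2 * (u z x).1 := rfl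
        rw [this]
        exact (((differentiable_const _).mul (hdiff x hx).2).sub
          ((differentiable_const _).mul (hdiff x hx).1)).differentiableAt
      exact (hdo z₀ (Metric.mem_ball_self one_pos)).differentiableAt
        (Metric.isOpen_ball.mem_nhds (Metric.mem_ball_self one_pos))
    exact ⟨hgen Φ₀ hΦ hΦc hΦsq hptΦ WΦ hWΦlim, hgen Θ₀ hΘ hΘc hΘsq hptΘ WΘ hWΘlim⟩
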